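/- Let (c,a) ∈ ℂ², let m ≥ 0 and k ≥ 1 be integers, let ζ ∈ ℂ satisfy ζ^{3^k − 1} = 1, and set Q(z) = ζ·P_{c,a}^m(z) + (1−ζ)·c/2. If Q ∘ P_{c,a}^k = P_{c,a}^k ∘ Q, then Q(Crit(P_{c,a}^{k+m})) = Q(Crit(P_{c,a}^m)) ∪ Crit(P_{c,a}^k), where Crit(f) = {z ∈ ℂ : f'(z) = 0}. -/

import Mathlib

/-- The cubic polynomial `P_{c,a}(z) = z³/3 − (c/2)z² + a³`. -/
noncomputable def P (c a z : ℂ) : ℂ := z ^ 3 / 3 - c / 2 * z ^ 2 + a ^ 3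

lemma P_diff (c a : ℂ) : Differentiable ℂ (P c a) := by
  unfold P
  exact (((differentiable_pow 3).div_const 3).sub
    ((differentiable_const _).mul (differentiable_pow 2))).add (differentiable_const _)

lemma iter_diff (c a : ℂ) (n : ℕ) : Differentiable ℂ ((P c a)^[n]) := by
  induction n with
  | zero => simp only [Function.iterate_zero]; exact differentiable_id
  | succ n ih => rw [Function.iterate_succ']; exact (P_diff c a).comp ih

lemma deriv_iter_add (c a : ℂ) (k m : ℕ) (z : ℂ) :
    deriv ((P c a)^[k + m]) z
      = deriv ((P c a)^[k]) ((P c a)^[m] z) * deriv ((P c a)^[m]) z := by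
  have h : (P c a)^[k + m] = (P c a)^[k] ∘ (P c a)^[m] := by
    funext x; exact Function.iterate_add_apply _ _ _ _
  rw [h, deriv_comp z ((iter_diff c a k) _) ((iter_diff c a m) _)]

lemma P_surj (c a : ℂ) : Function.Surjective (P c a) := by
  intro w
  set p : Polynomial ℂ :=
    Polynomial.C (3⁻¹ : ℂ) * Polynomial.X ^ 3 - Polynomial.C (c / 2) * Polynomial.X ^ 2
      + Polynomial.C (a ^ 3 - w) with hp
  have hdeg : p.degree = 3 := by
    rw [hp]; compute_degree!
  obtain ⟨z, hz⟩ := Complex.exists_root (f := p) (by rw [hdeg]; norm_num)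
  refine ⟨z, ?_⟩
  have hz' : 3⁻¹ * z ^ 3 - c / 2 * z ^ 2 + (a ^ 3 - w) = 0 := by
    simpa [hp, Polynomial.IsRoot] using hz
  unfold P
  linear_combination hz'

lemma L_deriv_inv (c a : ℂ) (k : ℕ) (ζ : ℂ) (hζ0 : ζ ≠ 0)
    (hL : ∀ w, ζ * (P c a)^[k] w + (1 - ζ) * c / 2
        = (P c a)^[k] (ζ * w + (1 - ζ) * c / 2)) :
    ∀ w, deriv ((P c a)^[k]) (ζ * w + (1 - ζ) * c / 2) = deriv ((P c a)^[k]) w := by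
  intro w
  set f := (P c a)^[k] with hf
  have hgh : (fun w => ζ * f w + (1 - ζ) * c / 2)
      = fun w => f (ζ * w + (1 - ζ) * c / 2) := funext hL
  have h1 : HasDerivAt (fun w => ζ * f w + (1 - ζ) * c / 2) (ζ * deriv f w) w :=
    (((iter_diff c a k) w).hasDerivAt.const_mul ζ).add_const _
  have haff : HasDerivAt (fun w : ℂ => ζ * w + (1 - ζ) * c / 2) (ζ * 1) w :=
    ((hasDerivAt_id w).const_mul ζ).add_const _
  have h2 : HasDerivAt (fun w => f (ζ * w + (1 - ζ) * c / 2))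
      (deriv f (ζ * w + (1 - ζ) * c / 2) * (ζ * 1)) w :=
    (((iter_diff c a k) _).hasDerivAt).comp w haff
  have h3 : ζ * deriv f w = deriv f (ζ * w + (1 - ζ) * c / 2) * (ζ * 1) :=
    (hgh ▸ h1).unique h2
  rw [mul_one, mul_comm (deriv f _) ζ] at h3
  exact (mul_left_cancel₀ hζ0 h3).symm

/-- If `Q(z) = ζ P_{c,a}^m(z) + (1−ζ)c/2` with `ζ^{3^k−1} = 1` commutes with
`P_{c,a}^k`, then `Q(Crit(P^{k+m})) = Q(Crit(P^m)) ∪ Crit(P^k)`, where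
`Crit(f) = {z : f'(z) = 0}`. -/
theorem stmt15 (c a : ℂ) (m k : ℕ) (hk : 1 ≤ k) (ζ : ℂ)
    (hζ : ζ ^ (3 ^ k - 1) = 1)
    (Q : ℂ → ℂ) (hQ : Q = fun z => ζ * (P c a)^[m] z + (1 - ζ) * c / 2)
    (hcomm : Q ∘ (P c a)^[k] = (P c a)^[k] ∘ Q) :
    Q '' {z : ℂ | deriv ((P c a)^[k + m]) z = 0} =
      Q '' {z : ℂ | deriv ((P c a)^[m]) z = 0} ∪ {z : ℂ | deriv ((P c a)^[k]) z = 0} := by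
  have hζ0 : ζ ≠ 0 := by
    intro h
    rw [h, zero_pow] at hζ
    · exact one_ne_zero hζ.symm
    · have : (3:ℕ) ^ 1 ≤ 3 ^ k := Nat.pow_le_pow_right (by norm_num) hk
      omega
  have hmsurj : Function.Surjective ((P c a)^[m]) := (P_surj c a).iterate m
  -- L commutes with P^[k]
  have hL : ∀ w, ζ * (P c a)^[k] w + (1 - ζ) * c / 2
      = (P c a)^[k] (ζ * w + (1 - ζ) * c / 2) := by
    intro w
    obtain ⟨z, rfl⟩ := hmsurj w
    have h0 := congrFun hcomm z
    simp only [Function.comp_apply, hQ] at h0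
    have h1 : (P c a)^[m] ((P c a)^[k] z) = (P c a)^[k] ((P c a)^[m] z) := by
      rw [← Function.iterate_add_apply, ← Function.iterate_add_apply, Nat.add_comm]
    rw [h1] at h0
    exact h0
  have hder := L_deriv_inv c a k ζ hζ0 hL
  subst hQ
  ext w
  simp only [Set.mem_image, Set.mem_union, Set.mem_setOf_eq]
  constructor
  · rintro ⟨z, hz, rfl⟩
    rw [deriv_iter_add] at hz
    rcases mul_eq_zero.1 hz with h | h
    · right
      rw [hder]
      exact h
    · left
      exact ⟨z, h, rfl⟩
  · rintro (⟨z, hz, rfl⟩ | hw)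
    · exact ⟨z, by rw [deriv_iter_add, hz, mul_zero], rfl⟩
    · set u : ℂ := (w - (1 - ζ) * c / 2) / ζ with hu
      have hLu : ζ * u + (1 - ζ) * c / 2 = w := by
        field_simp [hu]
        rw [hu, mul_div_assoc', mul_div_cancel_left₀ _ hζ0]; ring
      obtain ⟨z, hz⟩ := hmsurj u
      refine ⟨z, ?_, by rw [hz, hLu]⟩
      rw [deriv_iter_add, hz]
      have : deriv ((P c a)^[k]) u = 0 := by
        rw [← hder u, hLu]; exact hw
      rw [this, zero_mul]
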